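/- arXiv:1004.4677 — 2 statements merged into one kernel-verified Lean document; each statement's English description precedes it below -/
import Mathlib

section
/- Let 𝓑 be a bounding class, (G, L) a group with length function, and let S and T be free G-sets equipped with weight functions w_S and w_T. Suppose: S/G is finite, with a complete set of orbit representatives s₁, …, s_N ∈ S satisfying w_S(s_j) ≤ w_S(g·s_j) for all j and all g ∈ G; and there exist constants D₁, D₂, D₃ with w(gz) ≤ D₁·L(g) + w(z) for all z in S or T (w the respective weight) and L(g) ≤ D₂·w_S(g·s_j) + D₃ for all 1 ≤ j ≤ N and g ∈ G. Let V = ℂ[S] and W = ℂ[T] be the spaces of finitely supported ℂ-valued functions, with weighted ℓ¹-seminorms ‖Σ α_z z‖_λ = Σ |α_z|·λ(w(z)) for λ ∈ 𝓑. Then every G-equivariant linear map 𝔣 : V → W is 𝓑-bounded: for every λ ∈ 𝓑 there exists λ₁ ∈ 𝓑 with ‖𝔣(v)‖_λ ≤ ‖v‖_{λ₁} for all v ∈ V. -/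
open scoped BigOperators

/-- A bounding class: a set of non-decreasing positive functions on `[0,∞)`
containing the constant function `1`, weakly closed under non-negative rational
linear combinations and under right composition with affine functions with
non-negative rational coefficients. -/
structure BoundingClass where
  carrier : Set (ℝ → ℝ)
  mono : ∀ f ∈ carrier, ∀ x y : ℝ, 0 ≤ x → x ≤ y → f x ≤ f y
  pos : ∀ f ∈ carrier, ∀ x : ℝ, 0 ≤ x → 0 < f x
  one_mem : (fun _ => (1 : ℝ)) ∈ carrier
  lin_comb : ∀ (n : ℕ) (f : Fin n → (ℝ → ℝ)) (q : Fin n → ℚ),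
    (∀ i, f i ∈ carrier) → (∀ i, 0 ≤ q i) →
    ∃ g ∈ carrier, ∀ x : ℝ, 0 ≤ x → ∑ i, (q i : ℝ) * f i x < g x
  comp_lin : ∀ f ∈ carrier, ∀ a b : ℚ, 0 ≤ a → 0 ≤ b →
    ∃ h ∈ carrier, ∀ x : ℝ, 0 ≤ x → f ((a : ℝ) * x + (b : ℝ)) < h x

/-- The weighted `ℓ¹`-seminorm `‖Σ α_z z‖_λ = Σ |α_z| · λ (w z)` on `ℂ[Z]`. -/
noncomputable def wSeminorm {Z : Type*} (w : Z → ℝ) (lam : ℝ → ℝ) (x : Z →₀ ℂ) : ℝ :=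
  x.sum fun z c => ‖c‖ * lam (w z)

lemma wSeminorm_eq_sum {Z : Type*} (w : Z → ℝ) (lam : ℝ → ℝ) (x : Z →₀ ℂ)
    {A : Finset Z} (hA : x.support ⊆ A) :
    wSeminorm w lam x = ∑ z ∈ A, ‖x z‖ * lam (w z) :=
  Finsupp.sum_of_support_subset x hA _ (by simp)

lemma wSeminorm_smul {Z : Type*} (w : Z → ℝ) (lam : ℝ → ℝ) (c : ℂ) (x : Z →₀ ℂ) :
    wSeminorm w lam (c • x) = ‖c‖ * wSeminorm w lam x := by
  rw [wSeminorm_eq_sum w lam (c • x) (Finsupp.support_smul), wSeminorm_eq_sum w lam x subset_rfl,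
    Finset.mul_sum]
  refine Finset.sum_congr rfl fun z _ => ?_
  simp [mul_assoc]

lemma wSeminorm_sum_le {Z ι : Type*} (w : Z → ℝ) (lam : ℝ → ℝ)
    (hnn : ∀ z, 0 ≤ lam (w z)) (I : Finset ι) (u : ι → (Z →₀ ℂ)) :
    wSeminorm w lam (∑ i ∈ I, u i) ≤ ∑ i ∈ I, wSeminorm w lam (u i) := by
  classical
  set A : Finset Z := I.biUnion fun i => (u i).support with hA
  have hsub : (∑ i ∈ I, u i).support ⊆ A := by
    refine (Finsupp.support_finset_sum).trans ?_
    exact subset_rfl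
  rw [wSeminorm_eq_sum w lam _ hsub]
  have : ∀ i ∈ I, wSeminorm w lam (u i) = ∑ z ∈ A, ‖u i z‖ * lam (w z) := by
    intro i hi
    exact wSeminorm_eq_sum w lam _ (fun z hz => Finset.mem_biUnion.2 ⟨i, hi, hz⟩)
  rw [Finset.sum_congr rfl this, Finset.sum_comm]
  refine Finset.sum_le_sum fun z _ => ?_
  rw [← Finset.sum_mul]
  refine mul_le_mul_of_nonneg_right ?_ (hnn z)
  simpa using (norm_sum_le I (fun i => u i z)).trans_eq rfl |>.trans_eq' (by simp)

/-- with `S, T` free `G`-sets with weights, `S/G` finite with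
weight-minimizing orbit representatives `s₁, …, s_N`, and constants `D₁, D₂, D₃` as
in the statement, every `G`-equivariant linear map `𝔣 : ℂ[S] → ℂ[T]` is `𝓑`-bounded:
for every `λ ∈ 𝓑` there is `λ₁ ∈ 𝓑` with `‖𝔣 v‖_λ ≤ ‖v‖_{λ₁}` for all `v`. -/
theorem equivariant_map_bounded
    (B : BoundingClass)
    {G : Type*} [Group G] (L : G → ℝ)
    (hL_nonneg : ∀ g : G, 0 ≤ L g)
    (hL_sub : ∀ g h : G, L (g * h) ≤ L g + L h)
    (hL_inv : ∀ g : G, L g⁻¹ = L g)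
    {S T : Type*} [MulAction G S] [MulAction G T]
    (hfreeS : ∀ (g : G) (x : S), g • x = x → g = 1)
    (hfreeT : ∀ (g : G) (x : T), g • x = x → g = 1)
    (wS : S → ℝ) (wT : T → ℝ)
    (hwS_nonneg : ∀ x, 0 ≤ wS x) (hwT_nonneg : ∀ x, 0 ≤ wT x)
    -- a complete, weight-minimizing set of orbit representatives of `S/G`
    (N : ℕ) (s : Fin N → S)
    (hcomplete : ∀ x : S, ∃ (j : Fin N) (g : G), g • s j = x)
    (hdistinct : ∀ (j j' : Fin N) (g : G), g • s j = s j' → j = j')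
    (hmin : ∀ (j : Fin N) (g : G), wS (s j) ≤ wS (g • s j))
    -- the constants `D₁, D₂, D₃`
    (D₁ D₂ D₃ : ℝ) (hD₁ : 0 ≤ D₁) (hD₂ : 0 ≤ D₂) (hD₃ : 0 ≤ D₃)
    (hD₁S : ∀ (g : G) (z : S), wS (g • z) ≤ D₁ * L g + wS z)
    (hD₁T : ∀ (g : G) (z : T), wT (g • z) ≤ D₁ * L g + wT z)
    (hD₂₃ : ∀ (j : Fin N) (g : G), L g ≤ D₂ * wS (g • s j) + D₃)
    -- an arbitrary `G`-equivariant linear map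
    (𝔣 : (S →₀ ℂ) →ₗ[ℂ] (T →₀ ℂ))
    (hequiv : ∀ (g : G) (v : S →₀ ℂ),
      𝔣 (Finsupp.mapDomain (fun x => g • x) v)
        = Finsupp.mapDomain (fun x => g • x) (𝔣 v)) :
    ∀ lam ∈ B.carrier, ∃ lam₁ ∈ B.carrier,
      ∀ v : S →₀ ℂ, wSeminorm wT lam (𝔣 v) ≤ wSeminorm wS lam₁ v := by
  classical
  intro lam hlam
  set F : Fin N → (T →₀ ℂ) := fun j => 𝔣 (Finsupp.single (s j) 1) with hF
  set M : ℕ := Finset.univ.sup fun j => (F j).support.sup fun t => ⌈wT t⌉₊ with hM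
  set C : ℕ := Finset.univ.sup fun j =>
      ⌈∑ t ∈ (F j).support, ‖F j t‖⌉₊ with hC
  have hwT_le_M : ∀ (j : Fin N), ∀ t ∈ (F j).support, wT t ≤ (M : ℝ) := by
    intro j t ht
    have h1 : ⌈wT t⌉₊ ≤ (F j).support.sup fun t => ⌈wT t⌉₊ := Finset.le_sup (f := fun t => ⌈wT t⌉₊) ht
    have h2 : ((F j).support.sup fun t => ⌈wT t⌉₊) ≤ M :=
      Finset.le_sup (f := fun j => (F j).support.sup fun t => ⌈wT t⌉₊) (Finset.mem_univ j)
    calc wT t ≤ (⌈wT t⌉₊ : ℝ) := Nat.le_ceil _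
    _ ≤ (M : ℝ) := by exact_mod_cast h1.trans h2
  have hsum_le_C : ∀ j : Fin N,
      ∑ t ∈ (F j).support, ‖F j t‖ ≤ (C : ℝ) := by
    intro j
    calc ∑ t ∈ (F j).support, ‖F j t‖
        ≤ (⌈∑ t ∈ (F j).support, ‖F j t‖⌉₊ : ℝ) := Nat.le_ceil _
      _ ≤ (C : ℝ) := by
          exact_mod_cast Finset.le_sup
            (f := fun j => ⌈∑ t ∈ (F j).support, ‖F j t‖⌉₊) (Finset.mem_univ j)
  obtain ⟨qa, hqa⟩ := exists_rat_gt (D₁ * D₂)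
  obtain ⟨qb, hqb⟩ := exists_rat_gt (D₁ * D₃ + (M : ℝ))
  have hqa0 : (0 : ℚ) ≤ qa := by
    have : (0 : ℝ) < qa := lt_of_le_of_lt (mul_nonneg hD₁ hD₂) hqa
    exact_mod_cast this.le
  have hqb0 : (0 : ℚ) ≤ qb := by
    have : (0 : ℝ) < qb :=
      lt_of_le_of_lt (add_nonneg (mul_nonneg hD₁ hD₃) (Nat.cast_nonneg M)) hqb
    exact_mod_cast this.le
  obtain ⟨h, hh_mem, hh⟩ := B.comp_lin lam hlam qa qb hqa0 hqb0
  obtain ⟨lam₁, hlam₁_mem, hlt⟩ := B.lin_comb 1 (fun _ => h) (fun _ => (C : ℚ) + 1)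
    (fun _ => hh_mem) (fun _ => by positivity)
  have hlt' : ∀ x : ℝ, 0 ≤ x → ((C : ℝ) + 1) * h x < lam₁ x := by
    intro x hx
    have := hlt x hx
    simpa [Fin.sum_univ_one] using this
  refine ⟨lam₁, hlam₁_mem, ?_⟩
  -- key single estimate
  have key : ∀ z : S, wSeminorm wT lam (𝔣 (Finsupp.single z 1)) ≤ lam₁ (wS z) := by
    intro z
    obtain ⟨j, g, hg⟩ := hcomplete z
    have hmap : 𝔣 (Finsupp.single z 1)
        = Finsupp.mapDomain (fun t => g • t) (F j) := by
      rw [hF, ← hequiv g, Finsupp.mapDomain_single, hg]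
    have hinj : Function.Injective (fun t : T => g • t) := MulAction.injective g
    have hrepr : wSeminorm wT lam (𝔣 (Finsupp.single z 1))
        = ∑ t ∈ (F j).support, ‖F j t‖ * lam (wT (g • t)) := by
      rw [hmap]
      unfold wSeminorm
      rw [Finsupp.sum_mapDomain_index_inj hinj]
      rfl
    rw [hrepr]
    have hxz : 0 ≤ wS z := hwS_nonneg z
    have hbound : ∀ t ∈ (F j).support,
        lam (wT (g • t)) ≤ lam ((qa : ℝ) * wS z + (qb : ℝ)) := by
      intro t ht
      refine B.mono lam hlam _ _ (hwT_nonneg _) ?_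
      have h1 : wT (g • t) ≤ D₁ * L g + wT t := hD₁T g t
      have h2 : L g ≤ D₂ * wS z + D₃ := by
        have := hD₂₃ j g; rwa [hg] at this
      calc wT (g • t) ≤ D₁ * L g + wT t := h1
        _ ≤ D₁ * (D₂ * wS z + D₃) + (M : ℝ) := by
            refine add_le_add (mul_le_mul_of_nonneg_left h2 hD₁) (hwT_le_M j t ht)
        _ = (D₁ * D₂) * wS z + (D₁ * D₃ + (M : ℝ)) := by ring
        _ ≤ (qa : ℝ) * wS z + (qb : ℝ) :=
            add_le_add (mul_le_mul_of_nonneg_right hqa.le hxz) hqb.le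
    have hlampos : 0 ≤ lam ((qa : ℝ) * wS z + (qb : ℝ)) := by
      refine (B.pos lam hlam _ ?_).le
      positivity
    calc ∑ t ∈ (F j).support, ‖F j t‖ * lam (wT (g • t))
        ≤ ∑ t ∈ (F j).support, ‖F j t‖ * lam ((qa:ℝ) * wS z + qb) :=
          Finset.sum_le_sum fun t ht =>
            mul_le_mul_of_nonneg_left (hbound t ht) (norm_nonneg _)
      _ = (∑ t ∈ (F j).support, ‖F j t‖) * lam ((qa:ℝ) * wS z + qb) := by
          rw [Finset.sum_mul]
      _ ≤ ((C : ℝ) + 1) * lam ((qa:ℝ) * wS z + qb) := by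
          refine mul_le_mul_of_nonneg_right ?_ hlampos
          exact (hsum_le_C j).trans (by linarith)
      _ ≤ ((C : ℝ) + 1) * h (wS z) := by
          refine mul_le_mul_of_nonneg_left (hh (wS z) hxz).le (by positivity)
      _ ≤ lam₁ (wS z) := (hlt' (wS z) hxz).le
  intro v
  have hlamnn : ∀ t : T, 0 ≤ lam (wT t) := fun t =>
    (B.pos lam hlam _ (hwT_nonneg t)).le
  have hv : v = ∑ z ∈ v.support, (v z) • Finsupp.single z (1 : ℂ) := by
    conv_lhs => rw [← Finsupp.sum_single v]
    rw [Finsupp.sum]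
    refine Finset.sum_congr rfl fun z _ => ?_
    rw [Finsupp.smul_single, smul_eq_mul, mul_one]
  calc wSeminorm wT lam (𝔣 v)
      = wSeminorm wT lam (∑ z ∈ v.support, (v z) • 𝔣 (Finsupp.single z 1)) := by
        congr 1
        conv_lhs => rw [hv]
        rw [map_sum]
        exact Finset.sum_congr rfl fun z _ => (map_smul 𝔣 _ _)
    _ ≤ ∑ z ∈ v.support, wSeminorm wT lam ((v z) • 𝔣 (Finsupp.single z 1)) :=
        wSeminorm_sum_le wT lam hlamnn _ _
    _ = ∑ z ∈ v.support, ‖v z‖ * wSeminorm wT lam (𝔣 (Finsupp.single z 1)) := by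
        exact Finset.sum_congr rfl fun z _ => wSeminorm_smul wT lam (v z) _
    _ ≤ ∑ z ∈ v.support, ‖v z‖ * lam₁ (wS z) :=
        Finset.sum_le_sum fun z _ =>
          mul_le_mul_of_nonneg_left (key z) (norm_nonneg _)
    _ = wSeminorm wS lam₁ v := (wSeminorm_eq_sum wS lam₁ v subset_rfl).symm
end

section
/- In the setting of the previous lemma (𝓑 a bounding class; S, T free G-sets with weights w_S, w_T; S/G finite with weight-minimizing orbit representatives; constants D₁, D₂, D₃ as before; V = ℂ[S], W = ℂ[T] with weighted ℓ¹-seminorms ‖·‖_λ), let W₀ ⊆ W be a G-submodule and W'' = W/W₀ the quotient, equipped for each λ ∈ 𝓑 with the filling seminorm ‖u‖_{f,λ} = inf{‖v‖_λ : v ∈ W, π(v) = u}, where π : W → W'' is the projection. Then every G-equivariant linear map 𝔥 : V → W'' is 𝓑-bounded: for every λ ∈ 𝓑 there exists λ' ∈ 𝓑 with ‖𝔥(v)‖_{f,λ} ≤ ‖v‖_{λ'} for all v ∈ V. -/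
open scoped BigOperators

/-- The filling seminorm `‖u‖_{f,λ} = inf {‖v‖_λ | π v = u}` on the quotient
`W'' = ℂ[T]/W₀`. -/
noncomputable def fillSeminorm {T : Type*} (wT : T → ℝ) (lam : ℝ → ℝ)
    (W₀ : Submodule ℂ (T →₀ ℂ)) (u : (T →₀ ℂ) ⧸ W₀) : ℝ :=
  sInf {r : ℝ | ∃ v : T →₀ ℂ, Submodule.Quotient.mk v = u ∧ wSeminorm wT lam v = r}

lemma wSeminorm_nonneg {Z : Type*} {w : Z → ℝ} {lam : ℝ → ℝ}
    (hlam : ∀ z : Z, 0 ≤ lam (w z)) (x : Z →₀ ℂ) : 0 ≤ wSeminorm w lam x := by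
  rw [wSeminorm_eq_sum w lam x subset_rfl]
  exact Finset.sum_nonneg fun z _ => mul_nonneg (norm_nonneg _) (hlam z)

lemma wSeminorm_add_le {Z : Type*} {w : Z → ℝ} {lam : ℝ → ℝ}
    (hlam : ∀ z : Z, 0 ≤ lam (w z)) (x y : Z →₀ ℂ) :
    wSeminorm w lam (x + y) ≤ wSeminorm w lam x + wSeminorm w lam y := by
  classical
  rw [wSeminorm_eq_sum w lam (x + y) Finsupp.support_add,
    wSeminorm_eq_sum w lam x Finset.subset_union_left,
    wSeminorm_eq_sum w lam y Finset.subset_union_right, ← Finset.sum_add_distrib]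
  refine Finset.sum_le_sum fun z _ => ?_
  rw [← add_mul]
  refine mul_le_mul_of_nonneg_right ?_ (hlam z)
  rw [Finsupp.add_apply]
  exact norm_add_le _ _

lemma wSeminorm_single_add {Z : Type*} (w : Z → ℝ) (lam : ℝ → ℝ) (z : Z) (c : ℂ)
    (f : Z →₀ ℂ) (hz : z ∉ f.support) :
    wSeminorm w lam (Finsupp.single z c + f)
      = ‖c‖ * lam (w z) + wSeminorm w lam f := by
  classical
  have hsub : (Finsupp.single z c + f).support ⊆ insert z f.support := by
    refine Finsupp.support_add.trans (Finset.union_subset ?_ ?_)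
    · exact Finsupp.support_single_subset.trans (by simp)
    · exact Finset.subset_insert _ _
  rw [wSeminorm_eq_sum w lam _ hsub, Finset.sum_insert hz]
  have hfz : f z = 0 := Finsupp.notMem_support_iff.mp hz
  congr 1
  · rw [Finsupp.add_apply, Finsupp.single_eq_same, hfz, add_zero]
  · rw [wSeminorm_eq_sum w lam f subset_rfl]
    refine Finset.sum_congr rfl fun z' hz' => ?_
    have : z ≠ z' := fun h => hz (h ▸ hz')
    rw [Finsupp.add_apply, Finsupp.single_eq_of_ne this.symm, zero_add]

/-- in the setting of STATEMENT 9, if `W₀ ⊆ ℂ[T]` is a `G`-submodule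
with quotient `W'' = ℂ[T]/W₀` carrying the filling seminorms, then every
`G`-equivariant linear map `𝔥 : ℂ[S] → W''` is `𝓑`-bounded: for every `λ ∈ 𝓑` there
is `λ' ∈ 𝓑` with `‖𝔥 v‖_{f,λ} ≤ ‖v‖_{λ'}` for all `v`. -/
theorem equivariant_map_to_quotient_bounded
    (B : BoundingClass)
    {G : Type*} [Group G] (L : G → ℝ)
    (hL_nonneg : ∀ g : G, 0 ≤ L g)
    (hL_sub : ∀ g h : G, L (g * h) ≤ L g + L h)
    (hL_inv : ∀ g : G, L g⁻¹ = L g)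
    {S T : Type*} [MulAction G S] [MulAction G T]
    (hfreeS : ∀ (g : G) (x : S), g • x = x → g = 1)
    (hfreeT : ∀ (g : G) (x : T), g • x = x → g = 1)
    (wS : S → ℝ) (wT : T → ℝ)
    (hwS_nonneg : ∀ x, 0 ≤ wS x) (hwT_nonneg : ∀ x, 0 ≤ wT x)
    -- a complete, weight-minimizing set of orbit representatives of `S/G`
    (N : ℕ) (s : Fin N → S)
    (hcomplete : ∀ x : S, ∃ (j : Fin N) (g : G), g • s j = x)
    (hdistinct : ∀ (j j' : Fin N) (g : G), g • s j = s j' → j = j')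
    (hmin : ∀ (j : Fin N) (g : G), wS (s j) ≤ wS (g • s j))
    -- the constants `D₁, D₂, D₃`
    (D₁ D₂ D₃ : ℝ) (hD₁ : 0 ≤ D₁) (hD₂ : 0 ≤ D₂) (hD₃ : 0 ≤ D₃)
    (hD₁S : ∀ (g : G) (z : S), wS (g • z) ≤ D₁ * L g + wS z)
    (hD₁T : ∀ (g : G) (z : T), wT (g • z) ≤ D₁ * L g + wT z)
    (hD₂₃ : ∀ (j : Fin N) (g : G), L g ≤ D₂ * wS (g • s j) + D₃)
    -- a `G`-invariant submodule `W₀` of `W = ℂ[T]`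
    (W₀ : Submodule ℂ (T →₀ ℂ))
    (hW₀ : ∀ (g : G) (x : T →₀ ℂ), x ∈ W₀ → Finsupp.mapDomain (fun t => g • t) x ∈ W₀)
    -- an arbitrary `G`-equivariant linear map into the quotient `W'' = W/W₀`
    (𝔥 : (S →₀ ℂ) →ₗ[ℂ] ((T →₀ ℂ) ⧸ W₀))
    (hequiv : ∀ (g : G) (v : S →₀ ℂ) (x : T →₀ ℂ),
      Submodule.Quotient.mk x = 𝔥 v →
        𝔥 (Finsupp.mapDomain (fun z => g • z) v)
          = Submodule.Quotient.mk (Finsupp.mapDomain (fun t => g • t) x)) :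
    ∀ lam ∈ B.carrier, ∃ lam' ∈ B.carrier,
      ∀ v : S →₀ ℂ, fillSeminorm wT lam W₀ (𝔥 v) ≤ wSeminorm wS lam' v := by
  classical
  intro lam hlam
  have hlamT : ∀ t : T, 0 ≤ lam (wT t) :=
    fun t => (B.pos lam hlam _ (hwT_nonneg t)).le
  -- choose representatives of the images of the orbit representatives
  have hx : ∀ j : Fin N, ∃ x : T →₀ ℂ,
      Submodule.Quotient.mk x = 𝔥 (Finsupp.single (s j) 1) :=
    fun j => Submodule.Quotient.mk_surjective W₀ _
  choose xj hxj using hx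
  -- total mass and weight bounds over all representatives
  set Atot : ℝ := ∑ j : Fin N, ∑ t ∈ (xj j).support, ‖(xj j) t‖ with hAtot
  set Cb : ℝ := ∑ j : Fin N, ∑ t ∈ (xj j).support, wT t with hCbdef
  have hAtot0 : 0 ≤ Atot :=
    Finset.sum_nonneg fun j _ => Finset.sum_nonneg fun t _ => norm_nonneg _
  have hCb0 : 0 ≤ Cb :=
    Finset.sum_nonneg fun j _ => Finset.sum_nonneg fun t _ => hwT_nonneg t
  have hmass : ∀ j : Fin N, ∑ t ∈ (xj j).support, ‖(xj j) t‖ ≤ Atot := by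
    intro j
    refine Finset.single_le_sum (f := fun j : Fin N => ∑ t ∈ (xj j).support,
      ‖(xj j) t‖) (fun j' _ => Finset.sum_nonneg fun t _ => norm_nonneg _)
      (Finset.mem_univ j)
  have hwt : ∀ (j : Fin N), ∀ t ∈ (xj j).support, wT t ≤ Cb := by
    intro j t ht
    have h1 : wT t ≤ ∑ t' ∈ (xj j).support, wT t' :=
      Finset.single_le_sum (fun t' _ => hwT_nonneg t') ht
    refine h1.trans ?_
    exact Finset.single_le_sum (f := fun j : Fin N => ∑ t ∈ (xj j).support, wT t)
      (fun j' _ => Finset.sum_nonneg fun t' _ => hwT_nonneg t') (Finset.mem_univ j)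
  -- rational constants
  obtain ⟨qa, hqa⟩ := exists_rat_gt (D₁ * D₂)
  obtain ⟨qb, hqb⟩ := exists_rat_gt (D₁ * D₃ + Cb)
  have hqa0 : (0 : ℚ) ≤ qa := by
    have : (0 : ℝ) < (qa : ℝ) := (mul_nonneg hD₁ hD₂).trans_lt hqa
    exact_mod_cast this.le
  have hqb0 : (0 : ℚ) ≤ qb := by
    have : (0 : ℝ) < (qb : ℝ) := (add_nonneg (mul_nonneg hD₁ hD₃) hCb0).trans_lt hqb
    exact_mod_cast this.le
  obtain ⟨h, hhB, hhlt⟩ := B.comp_lin lam hlam qa qb hqa0 hqb0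
  obtain ⟨qM, hqM⟩ := exists_rat_gt Atot
  have hqM0 : (0 : ℚ) ≤ qM := by
    have : (0 : ℝ) < (qM : ℝ) := hAtot0.trans_lt hqM
    exact_mod_cast this.le
  obtain ⟨lam', hlam', hlt'⟩ := B.lin_comb 1 (fun _ => h) (fun _ => qM)
    (fun _ => hhB) (fun _ => hqM0)
  have hlt'' : ∀ x : ℝ, 0 ≤ x → (qM : ℝ) * h x < lam' x := by
    intro x hx
    have := hlt' x hx
    simpa using this
  refine ⟨lam', hlam', ?_⟩
  have hlamS' : ∀ z : S, 0 ≤ lam' (wS z) :=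
    fun z => (B.pos lam' hlam' _ (hwS_nonneg z)).le
  -- choose orbit data for each point of S
  choose jz gz hgz using hcomplete
  -- the lift of each basis vector
  set ψ : S → (T →₀ ℂ) := fun z => Finsupp.mapDomain (fun t => gz z • t) (xj (jz z))
    with hψdef
  have hψmk : ∀ z : S, Submodule.Quotient.mk (ψ z) = 𝔥 (Finsupp.single z 1) := by
    intro z
    have := hequiv (gz z) (Finsupp.single (s (jz z)) 1) (xj (jz z)) (hxj (jz z))
    rw [Finsupp.mapDomain_single, hgz z] at this
    exact this.symm
  -- norm bound on the lifted basis vectors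
  have hψle : ∀ z : S, wSeminorm wT lam (ψ z) ≤ lam' (wS z) := by
    intro z
    have hinj : Function.Injective (fun t : T => gz z • t) := MulAction.injective (gz z)
    have heq : wSeminorm wT lam (ψ z)
        = (xj (jz z)).sum fun t c => ‖c‖ * lam (wT (gz z • t)) :=
      Finsupp.sum_mapDomain_index_inj hinj
    have hterm : ∀ t ∈ (xj (jz z)).support,
        lam (wT (gz z • t)) ≤ h (wS z) := by
      intro t ht
      have h1 : wT (gz z • t) ≤ D₁ * L (gz z) + wT t := hD₁T _ _
      have h2 : L (gz z) ≤ D₂ * wS z + D₃ := by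
        have := hD₂₃ (jz z) (gz z); rwa [hgz z] at this
      have h3 : D₁ * L (gz z) ≤ D₁ * (D₂ * wS z + D₃) :=
        mul_le_mul_of_nonneg_left h2 hD₁
      have h4 : wT t ≤ Cb := hwt _ _ ht
      have h5 : (D₁ * D₂) * wS z ≤ (qa : ℝ) * wS z :=
        mul_le_mul_of_nonneg_right hqa.le (hwS_nonneg z)
      have harg : wT (gz z • t) ≤ (qa : ℝ) * wS z + (qb : ℝ) := by nlinarith
      have hm : lam (wT (gz z • t)) ≤ lam ((qa : ℝ) * wS z + (qb : ℝ)) :=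
        B.mono lam hlam _ _ (hwT_nonneg _) harg
      exact hm.trans (hhlt (wS z) (hwS_nonneg z)).le
    have hsum : (xj (jz z)).sum (fun t c => ‖c‖ * lam (wT (gz z • t)))
        ≤ (∑ t ∈ (xj (jz z)).support, ‖(xj (jz z)) t‖) * h (wS z) := by
      rw [Finsupp.sum, Finset.sum_mul]
      refine Finset.sum_le_sum fun t ht => ?_
      exact mul_le_mul_of_nonneg_left (hterm t ht) (norm_nonneg _)
    have hfin : (∑ t ∈ (xj (jz z)).support, ‖(xj (jz z)) t‖) * h (wS z)
        ≤ (qM : ℝ) * h (wS z) := by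
      refine mul_le_mul_of_nonneg_right ((hmass (jz z)).trans hqM.le)
        (B.pos h hhB _ (hwS_nonneg z)).le
    calc wSeminorm wT lam (ψ z) = _ := heq
      _ ≤ _ := hsum
      _ ≤ (qM : ℝ) * h (wS z) := hfin
      _ ≤ lam' (wS z) := (hlt'' (wS z) (hwS_nonneg z)).le
  -- for every v there is a lift with the right bound
  have key : ∀ v : S →₀ ℂ, ∃ x : T →₀ ℂ, Submodule.Quotient.mk x = 𝔥 v ∧
      wSeminorm wT lam x ≤ wSeminorm wS lam' v := by
    intro v
    induction v using Finsupp.induction with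
    | zero =>
      refine ⟨0, ?_, ?_⟩
      · rw [map_zero]; rfl
      · simp [wSeminorm]
    | single_add z c f hzf hc ih =>
      obtain ⟨x, hxmk, hxle⟩ := ih
      refine ⟨c • ψ z + x, ?_, ?_⟩
      · have h1 : (Submodule.Quotient.mk (c • ψ z + x) : (T →₀ ℂ) ⧸ W₀)
            = c • (Submodule.Quotient.mk (ψ z)) + Submodule.Quotient.mk x := by
          rw [Submodule.Quotient.mk_add, Submodule.Quotient.mk_smul]
        rw [h1, hψmk z, hxmk, ← map_smul, ← map_add]
        congr 1
        rw [Finsupp.smul_single, smul_eq_mul, mul_one]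
      · have h2 : wSeminorm wT lam (c • ψ z + x)
            ≤ ‖c‖ * wSeminorm wT lam (ψ z) + wSeminorm wT lam x := by
          refine (wSeminorm_add_le hlamT _ _).trans ?_
          rw [wSeminorm_smul]
        rw [wSeminorm_single_add wS lam' z c f hzf]
        refine h2.trans (add_le_add ?_ hxle)
        exact mul_le_mul_of_nonneg_left (hψle z) (norm_nonneg _)
  -- conclude via the infimum
  intro v
  obtain ⟨x, hxmk, hxle⟩ := key v
  have hbdd : BddBelow {r : ℝ | ∃ u : T →₀ ℂ,
      Submodule.Quotient.mk u = 𝔥 v ∧ wSeminorm wT lam u = r} := by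
    refine ⟨0, ?_⟩
    rintro r ⟨u, -, rfl⟩
    exact wSeminorm_nonneg hlamT u
  have hmem : wSeminorm wT lam x ∈ {r : ℝ | ∃ u : T →₀ ℂ,
      Submodule.Quotient.mk u = 𝔥 v ∧ wSeminorm wT lam u = r} := ⟨x, hxmk, rfl⟩
  exact (csInf_le hbdd hmem).trans hxle
end
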